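/- arXiv:1405.4880 — 2 statements merged into one kernel-verified Lean document; each statement's English description precedes it below -/
import Mathlib

section
/- For any simple graph G on n vertices, ε(G) is at most the number of acyclic orientations of the complement graph Ḡ, with equality if and only if G is a complete p-partite graph for some p ∈ [n]. -/
/-- An orientation of a simple graph `G`: a choice of direction for each edge. -/
structure GraphOrientation {V : Type*} (G : SimpleGraph V) where
  dir : V → V → Prop
  dir_adj : ∀ u v, dir u v → G.Adj u v
  adj_dir : ∀ u v, G.Adj u v → dir u v ∨ dir v u
  asymm : ∀ u v, dir u v → ¬ dir v u

/-- An orientation is acyclic if there is no directed cycle. -/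
def GraphOrientation.Acyclic {V : Type*} {G : SimpleGraph V} (O : GraphOrientation G) : Prop :=
  ∀ v, ¬ Relation.TransGen O.dir v v

/-- Linear extensions of the poset induced (by reachability) by an orientation:
bijective labelings of the vertices by `Fin (card V)` compatible with directed paths. -/
def GraphOrientation.LinExt {V : Type*} [Fintype V] {G : SimpleGraph V} (O : GraphOrientation G) :
    Type _ :=
  {f : V ≃ Fin (Fintype.card V) // ∀ u v, Relation.TransGen O.dir u v → f u < f v}

/-- The number of linear extensions of the poset induced by an orientation. -/
noncomputable def GraphOrientation.numLinExt {V : Type*} [Fintype V] {G : SimpleGraph V}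
    (O : GraphOrientation G) : ℕ :=
  Nat.card O.LinExt


/-- The maximal number of linear extensions of a poset induced by an acyclic
orientation of `G`, denoted `ε(G)` in the paper. -/
noncomputable def maxLinExt {V : Type*} [Fintype V] (G : SimpleGraph V) : ℕ :=
  sSup {k | ∃ O : GraphOrientation G, O.Acyclic ∧ k = O.numLinExt}

/-- The number of acyclic orientations of a graph. -/
noncomputable def numAcyclicOrientations {V : Type*} (G : SimpleGraph V) : ℕ :=
  Nat.card {O : GraphOrientation G // O.Acyclic}

set_option linter.unusedSectionVars false

section Aux
open Function

variable {V : Type*}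

lemma GraphOrientation.ext' {G : SimpleGraph V} {O O' : GraphOrientation G}
    (h : O.dir = O'.dir) : O = O' := by
  cases O; cases O'; simpa using h

instance {G : SimpleGraph V} [Finite V] : Finite (GraphOrientation G) :=
  Finite.of_injective (fun O : GraphOrientation G => O.dir)
    (fun _ _ h => GraphOrientation.ext' h)

instance {G : SimpleGraph V} [Fintype V] (O : GraphOrientation G) : Finite O.LinExt := by
  unfold GraphOrientation.LinExt; infer_instance

/-- Orientation of `H` induced by an injective rank function. -/
def rankOrient (H : SimpleGraph V) (h : V → ℕ) (hinj : Injective h) : GraphOrientation H where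
  dir u v := H.Adj u v ∧ h u < h v
  dir_adj _ _ hd := hd.1
  adj_dir u v ha := by
    rcases lt_trichotomy (h u) (h v) with hl | he | hl
    · exact Or.inl ⟨ha, hl⟩
    · exact absurd (hinj he) ha.ne
    · exact Or.inr ⟨ha.symm, hl⟩
  asymm _ _ hd hd' := lt_asymm hd.2 hd'.2

lemma rankOrient_mono (H : SimpleGraph V) (h : V → ℕ) (hinj : Injective h) :
    ∀ a b, Relation.TransGen (rankOrient H h hinj).dir a b → h a < h b := by
  intro a b hab
  induction hab with
  | single h1 => exact h1.2
  | tail _ h1 ih => exact ih.trans h1.2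

lemma rankOrient_acyclic (H : SimpleGraph V) (h : V → ℕ) (hinj : Injective h) :
    (rankOrient H h hinj).Acyclic :=
  fun v hv => lt_irrefl _ (rankOrient_mono H h hinj v v hv)

end Aux

section Phi
open Function

variable {V : Type*} [Fintype V] {G : SimpleGraph V}

/-- rank function from a linear extension -/
lemma linExt_rank_inj (O : GraphOrientation G) (g : O.LinExt) :
    Injective (fun v => ((g.1 v : Fin (Fintype.card V)) : ℕ)) :=
  fun _ _ h => g.1.injective (Fin.val_injective h)

/-- The acyclic orientation of `Gᶜ` induced by a linear extension. -/
noncomputable def Phi (O : GraphOrientation G) (g : O.LinExt) :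
    {D : GraphOrientation Gᶜ // D.Acyclic} :=
  ⟨rankOrient Gᶜ _ (linExt_rank_inj O g), rankOrient_acyclic _ _ _⟩

lemma Phi_injective (O : GraphOrientation G) : Injective (Phi O) := by
  intro g g' h
  have hdir : ∀ u v, (Gᶜ.Adj u v ∧ ((g.1 u : ℕ) < (g.1 v : ℕ))) ↔
      (Gᶜ.Adj u v ∧ ((g'.1 u : ℕ) < (g'.1 v : ℕ))) := by
    intro u v
    have := congrArg Subtype.val h
    have h2 := congrArg GraphOrientation.dir this
    exact iff_of_eq (congrFun (congrFun h2 u) v)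
  have key : ∀ u v : V, g.1 u < g.1 v → g'.1 u < g'.1 v := by
    intro u v huv
    have hne : u ≠ v := by rintro rfl; exact lt_irrefl _ huv
    by_cases hadj : G.Adj u v
    · rcases O.adj_dir u v hadj with hd | hd
      · exact g'.2 u v (Relation.TransGen.single hd)
      · exact absurd huv (lt_asymm (g.2 v u (Relation.TransGen.single hd)))
    · have hc : Gᶜ.Adj u v := ⟨hne, hadj⟩
      have := (hdir u v).mp ⟨hc, huv⟩
      exact this.2
  -- conclude g = g'
  have hmono : StrictMono (fun i => g'.1 (g.1.symm i)) := by
    intro i j hij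
    apply key
    simpa using hij
  have hrange : Set.range (fun i => g'.1 (g.1.symm i)) = Set.range (id : Fin (Fintype.card V) → Fin (Fintype.card V)) := by
    rw [Set.range_id]
    exact Set.range_eq_univ.mpr ((g.1.symm.trans g'.1).surjective)
  have inst : WellFoundedLT (Fin (Fintype.card V)) := inferInstance
  have hid := (@StrictMono.range_inj (Fin (Fintype.card V)) (Fin (Fintype.card V))
    inferInstance inferInstance inst _ id hmono strictMono_id).mp hrange
  apply Subtype.ext
  apply Equiv.ext
  intro v
  have := congrFun hid (g.1 v)
  simpa using this.symm

lemma numLinExt_le (O : GraphOrientation G) : O.numLinExt ≤ numAcyclicOrientations Gᶜ :=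
  Nat.card_le_card_of_injective (Phi O) (Phi_injective O)

end Phi

section Multipartite
open Function Relation

variable {V : Type*} [Fintype V] {G : SimpleGraph V}

/-- Orientation of a complete multipartite graph by part index. -/
def partOrient {p : ℕ} (f : V → Fin p) (hf : ∀ u v, G.Adj u v ↔ f u ≠ f v) :
    GraphOrientation G where
  dir u v := G.Adj u v ∧ f u < f v
  dir_adj _ _ hd := hd.1
  adj_dir u v ha := by
    rcases lt_trichotomy (f u) (f v) with hl | he | hl
    · exact Or.inl ⟨ha, hl⟩
    · exact absurd he ((hf u v).mp ha)
    · exact Or.inr ⟨ha.symm, hl⟩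
  asymm _ _ hd hd' := lt_asymm hd.2 hd'.2

lemma partOrient_acyclic {p : ℕ} (f : V → Fin p) (hf : ∀ u v, G.Adj u v ↔ f u ≠ f v) :
    (partOrient f hf).Acyclic := by
  intro v hv
  have mono : ∀ a b, Relation.TransGen (partOrient f hf).dir a b → f a < f b := by
    intro a b hab
    induction hab with
    | single h1 => exact h1.2
    | tail _ h1 ih => exact ih.trans h1.2
  exact lt_irrefl _ (mono v v hv)

lemma partOrient_surjective {p : ℕ} (f : V → Fin p) (hf : ∀ u v, G.Adj u v ↔ f u ≠ f v) :
    Surjective (Phi (partOrient f hf)) := by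
  classical
  rintro ⟨D, hD⟩
  set O := partOrient f hf with hO
  set R : V → V → Prop := fun u v => O.dir u v ∨ D.dir u v with hR
  have hDf1 : ∀ u v, D.dir u v → f u = f v := by
    intro u v h
    have hadj := D.dir_adj u v h
    rw [SimpleGraph.compl_adj] at hadj
    by_contra hne
    exact hadj.2 ((hf u v).mpr hne)
  have hDf : ∀ u v, TransGen D.dir u v → f u = f v := by
    intro u v h
    induction h with
    | single h1 => exact hDf1 _ _ h1
    | tail _ h1 ih => exact ih.trans (hDf1 _ _ h1)
  have hcase : ∀ u v, TransGen R u v → TransGen D.dir u v ∨ f u < f v := by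
    intro u v h
    induction h with
    | single h1 =>
      rcases h1 with h1 | h1
      · exact Or.inr h1.2
      · exact Or.inl (TransGen.single h1)
    | tail _ h1 ih =>
      rename_i b c _
      rcases ih with ih | ih
      · rcases h1 with h1 | h1
        · exact Or.inr ((hDf _ _ ih) ▸ h1.2)
        · exact Or.inl (ih.tail h1)
      · rcases h1 with h1 | h1
        · exact Or.inr (ih.trans h1.2)
        · exact Or.inr ((hDf1 _ _ h1) ▸ ih)
  have hirr : ∀ v, ¬ TransGen R v v := by
    intro v hv
    rcases hcase v v hv with h | h
    · exact hD v h
    · exact lt_irrefl _ h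
  have htot : ∀ u v : V, u ≠ v → R u v ∨ R v u := by
    intro u v hne
    by_cases hadj : G.Adj u v
    · rcases O.adj_dir u v hadj with h | h
      · exact Or.inl (Or.inl h)
      · exact Or.inr (Or.inl h)
    · have : Gᶜ.Adj u v := ⟨hne, hadj⟩
      rcases D.adj_dir u v this with h | h
      · exact Or.inl (Or.inr h)
      · exact Or.inr (Or.inr h)
  set lt' : V → V → Prop := Relation.TransGen R with hlt'
  haveI hSTO : IsStrictTotalOrder V lt' :=
    { irrefl := hirr
      trans := fun _ _ _ h1 h2 => TransGen.trans h1 h2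
      trichotomous := fun a b => by
        by_cases h : a = b
        · exact fun _ _ => h
        · exact fun h1 h2 => ((htot a b h).elim (fun x => h1 (TransGen.single x)) (fun x => h2 (TransGen.single x))).elim }
  letI linOrd : LinearOrder V := linearOrderOfSTO lt'
  let giso : V ≃o Fin (Fintype.card V) := (monoEquivOfFin V rfl).symm
  have glt : ∀ u v : V, lt' u v ↔ giso u < giso v := by
    intro u v
    exact (OrderIso.lt_iff_lt giso).symm
  refine ⟨⟨giso.toEquiv, ?_⟩, ?_⟩
  · intro u v h
    have h2 : lt' u v := h.lift (p := R) id (fun a b hab => Or.inl hab)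
    exact (glt u v).mp h2
  · apply Subtype.ext
    apply GraphOrientation.ext'
    funext u v
    apply propext
    show (Gᶜ.Adj u v ∧ ((giso.toEquiv u : ℕ) < (giso.toEquiv v : ℕ))) ↔ D.dir u v
    constructor
    · rintro ⟨hadj, hlt⟩
      have h2 : lt' u v := (glt u v).mpr (Fin.lt_def.mpr hlt)
      rcases D.adj_dir u v hadj with hd | hd
      · exact hd
      · exact absurd (h2.trans (TransGen.single (Or.inr hd))) (hirr u)
    · intro hd
      have hadj := D.dir_adj u v hd
      have h2 : lt' u v := TransGen.single (Or.inr hd)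
      exact ⟨hadj, Fin.lt_def.mp ((glt u v).mp h2)⟩

end Multipartite

section Converse
open Function Relation

variable {V : Type*} [Fintype V] {G : SimpleGraph V}

lemma key_not_dir (O : GraphOrientation G) (hsurj : Surjective (Phi O))
    {x y z : V} (hxy : ¬ G.Adj x y) (hyz : ¬ G.Adj y z)
    (hxy' : x ≠ y) (hyz' : y ≠ z) (hxz' : x ≠ z) : ¬ O.dir z x := by
  classical
  intro hdir
  set e := Fintype.equivFin V with he
  set h : V → ℕ := fun w => if w = x then 0 else if w = y then 1 else if w = z then 2
    else (e w : ℕ) + 3 with hh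
  have hx : h x = 0 := by simp [hh]
  have hy : h y = 1 := by simp [hh, Ne.symm hxy']
  have hz : h z = 2 := by simp [hh, Ne.symm hxz', Ne.symm hyz']
  have hinj : Injective h := by
    intro a b hab
    rw [hh] at hab
    simp only at hab
    split_ifs at hab <;>
      first
        | omega
        | (subst_vars; rfl)
        | exact e.injective (Fin.val_injective (by omega))
  set D := rankOrient Gᶜ h hinj with hD
  obtain ⟨g, hg⟩ := hsurj ⟨D, rankOrient_acyclic _ _ _⟩
  have hgdir : ∀ u v, (Gᶜ.Adj u v ∧ ((g.1 u : ℕ) < (g.1 v : ℕ))) ↔ D.dir u v := by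
    intro u v
    have := congrArg (fun T => T.1.dir) hg
    exact iff_of_eq (congrFun (congrFun this u) v)
  have hcxy : Gᶜ.Adj x y := ⟨hxy', hxy⟩
  have hcyz : Gᶜ.Adj y z := ⟨hyz', hyz⟩
  have h1 : (g.1 x : ℕ) < g.1 y := ((hgdir x y).mpr ⟨hcxy, by rw [hx, hy]; omega⟩).2
  have h2 : (g.1 y : ℕ) < g.1 z := ((hgdir y z).mpr ⟨hcyz, by rw [hy, hz]; omega⟩).2
  have h3 : g.1 z < g.1 x := g.2 z x (TransGen.single hdir)
  rw [Fin.lt_def] at h3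
  omega

end Converse

section Main
open Function Relation

variable {V : Type*} [Fintype V] (G : SimpleGraph V)

lemma exists_acyclic : ∃ O : GraphOrientation G, O.Acyclic :=
  ⟨rankOrient G (fun v => (Fintype.equivFin V v : ℕ))
    (fun _ _ h => (Fintype.equivFin V).injective (Fin.val_injective h)),
    rankOrient_acyclic _ _ _⟩

lemma S_nonempty : {k | ∃ O : GraphOrientation G, O.Acyclic ∧ k = O.numLinExt}.Nonempty := by
  obtain ⟨O, hO⟩ := exists_acyclic G
  exact ⟨O.numLinExt, O, hO, rfl⟩

lemma S_bdd : ∀ k ∈ {k | ∃ O : GraphOrientation G, O.Acyclic ∧ k = O.numLinExt},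
    k ≤ numAcyclicOrientations Gᶜ := by
  rintro k ⟨O, _, rfl⟩
  exact numLinExt_le O

lemma maxLinExt_le_card : maxLinExt G ≤ numAcyclicOrientations Gᶜ :=
  csSup_le (S_nonempty G) (S_bdd G)

lemma maxLinExt_eq_of_multipartite {p : ℕ} (f : V → Fin p)
    (hf : ∀ u v, G.Adj u v ↔ f u ≠ f v) :
    maxLinExt G = numAcyclicOrientations Gᶜ := by
  have hbij : Bijective (Phi (partOrient f hf)) :=
    ⟨Phi_injective _, partOrient_surjective f hf⟩
  have hcard : (partOrient f hf).numLinExt = numAcyclicOrientations Gᶜ :=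
    Nat.card_eq_of_bijective _ hbij
  refine le_antisymm (maxLinExt_le_card G) ?_
  refine le_csSup ⟨numAcyclicOrientations Gᶜ, S_bdd G⟩ ?_
  exact ⟨partOrient f hf, partOrient_acyclic f hf, hcard.symm⟩

lemma multipartite_of_maxLinExt_eq (h : maxLinExt G = numAcyclicOrientations Gᶜ) :
    ∃ p : ℕ, p ≤ Fintype.card V ∧ ∃ f : V → Fin p, ∀ u v, G.Adj u v ↔ f u ≠ f v := by
  classical
  obtain ⟨O, hO, hOcard⟩ := Nat.sSup_mem (S_nonempty G) ⟨numAcyclicOrientations Gᶜ, S_bdd G⟩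
  have hbij : Bijective (Phi O) := by
    refine (Nat.bijective_iff_injective_and_card (Phi O)).mpr ⟨Phi_injective O, ?_⟩
    have hmax : maxLinExt G = O.numLinExt := hOcard
    exact hmax.symm.trans h
  have hsurj := hbij.2
  have htrans : ∀ a b c : V, a ≠ b → b ≠ c → ¬G.Adj a b → ¬G.Adj b c → ¬G.Adj a c := by
    intro a b c hab hbc h1 h2 hac
    have hane : a ≠ c := G.ne_of_adj hac
    rcases O.adj_dir a c hac with hd | hd
    · exact key_not_dir O hsurj (fun hh => h2 hh.symm) (fun hh => h1 hh.symm)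
        (Ne.symm hbc) (Ne.symm hab) (Ne.symm hane) hd
    · exact key_not_dir O hsurj h1 h2 hab hbc hane hd
  let s : Setoid V :=
    ⟨fun u v => u = v ∨ ¬ G.Adj u v,
      fun u => Or.inl rfl,
      fun {u v} huv => huv.imp Eq.symm (fun hn ha => hn ha.symm),
      by
        rintro a b c (rfl | h1) (rfl | h2)
        · exact Or.inl rfl
        · exact Or.inr h2
        · exact Or.inr h1
        · by_cases hab : a = b
          · subst hab; exact Or.inr h2
          · by_cases hbc : b = c
            · subst hbc; exact Or.inr h1
            · by_cases hac : a = c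
              · exact Or.inl hac
              · exact Or.inr (htrans a b c hab hbc h1 h2)⟩
  let Q := Quotient s
  haveI : Finite Q := Quotient.finite s
  refine ⟨Nat.card Q, ?_, ?_⟩
  · have h1 : Nat.card Q ≤ Nat.card V :=
      Nat.card_le_card_of_surjective (Quotient.mk s) (fun q => Quotient.exists_rep q)
    exact h1.trans_eq Nat.card_eq_fintype_card
  · set eQ := Finite.equivFin Q with heQ
    refine ⟨fun v => eQ ⟦v⟧, ?_⟩
    intro u v
    constructor
    · intro hadj heq
      have h2 : s.r u v := Quotient.eq.mp (eQ.injective heq)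
      rcases h2 with rfl | hna
      · exact G.loopless.irrefl u hadj
      · exact hna hadj
    · intro hne
      by_contra hadj
      exact hne (congrArg eQ (Quotient.sound (Or.inr hadj)))

end Main

theorem stmt_16 {V : Type*} [Fintype V] (G : SimpleGraph V) :
    maxLinExt G ≤ numAcyclicOrientations Gᶜ ∧
    (maxLinExt G = numAcyclicOrientations Gᶜ ↔
      ∃ p : ℕ, p ≤ Fintype.card V ∧
        ∃ f : V → Fin p, ∀ u v, G.Adj u v ↔ f u ≠ f v) := by
  refine ⟨maxLinExt_le_card G, ?_, ?_⟩
  · exact multipartite_of_maxLinExt_eq G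
  · rintro ⟨p, hp, f, hf⟩
    exact maxLinExt_eq_of_multipartite G f hf
end

section
/- Let G_o = (V,E) be a directed graph (with no pair of opposite edges). Then (1/2)·∑_{v∈V}(indeg(v) − outdeg(v))² = |E| + tri(G_o) + inc(G_o) − com(G_o), where tri(G_o) counts directed triangles {(u,v),(v,w),(u,w)} ⊆ E, inc(G_o) counts triples u,v,w with v,w non-adjacent and either both (u,v),(u,w) ∈ E or both (v,u),(w,u) ∈ E, and com(G_o) counts directed 2-paths (u,v),(v,w) ∈ E with u,w non-adjacent. -/
/-- In-degree of `v` in the directed graph with edge relation `r`. -/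
noncomputable def dIndeg {V : Type*} (r : V → V → Prop) (v : V) : ℕ :=
  Nat.card {u : V // r u v}

/-- Out-degree of `v` in the directed graph with edge relation `r`. -/
noncomputable def dOutdeg {V : Type*} (r : V → V → Prop) (v : V) : ℕ :=
  Nat.card {u : V // r v u}

/-- The number of directed edges. -/
noncomputable def dEdges {V : Type*} (r : V → V → Prop) : ℕ :=
  Nat.card {p : V × V // r p.1 p.2}

/-- The number of directed (transitive) triangles `(u,v),(v,w),(u,w)`. -/
noncomputable def dTri {V : Type*} (r : V → V → Prop) : ℕ :=
  Nat.card {t : V × V × V // r t.1 t.2.1 ∧ r t.2.1 t.2.2 ∧ r t.1 t.2.2}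

/-- The number of directed 2-paths `(u,v),(v,w)` with `u,w` non-adjacent. -/
noncomputable def dCom {V : Type*} (r : V → V → Prop) : ℕ :=
  Nat.card {t : V × V × V //
    r t.1 t.2.1 ∧ r t.2.1 t.2.2 ∧ ¬ r t.1 t.2.2 ∧ ¬ r t.2.2 t.1}

/-- The number of triples `u, {v,w}` with `v ≠ w` non-adjacent and either both
`(u,v),(u,w)` directed edges, or both `(v,u),(w,u)` directed edges. -/
noncomputable def dInc {V : Type*} (r : V → V → Prop) : ℕ :=
  Nat.card {p : V × Sym2 V // ∃ v w, p.2 = s(v, w) ∧ v ≠ w ∧ ¬ r v w ∧ ¬ r w v ∧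
    ((r p.1 v ∧ r p.1 w) ∨ (r v p.1 ∧ r w p.1))}

open Finset

private lemma qcard {α : Type*} [Fintype α] (p : α → Prop) [DecidablePred p] :
    ((Nat.card {x // p x} : ℚ)) = ∑ x : α, if p x then (1:ℚ) else 0 := by
  rw [Nat.card_eq_fintype_card, Fintype.card_subtype, Finset.card_filter]
  push_cast
  exact Finset.sum_congr rfl fun x _ => by split_ifs <;> simp

section helpers
variable {V : Type*} [Fintype V]

private lemma s12 (f : V → V → V → ℚ) :
    ∑ a : V, ∑ b : V, ∑ c : V, f a b c = ∑ a : V, ∑ b : V, ∑ c : V, f b a c :=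
  Finset.sum_comm

private lemma s23 (f : V → V → V → ℚ) :
    ∑ a : V, ∑ b : V, ∑ c : V, f a b c = ∑ a : V, ∑ b : V, ∑ c : V, f a c b :=
  Finset.sum_congr rfl fun _ _ => Finset.sum_comm

private lemma s13 (f : V → V → V → ℚ) :
    ∑ a : V, ∑ b : V, ∑ c : V, f a b c = ∑ a : V, ∑ b : V, ∑ c : V, f c b a :=
  (s12 f).trans ((s23 fun a b c => f b a c).trans (s12 fun a b c => f c a b))

private lemma rot3 (f : V → V → V → ℚ) :
    ∑ a : V, ∑ b : V, ∑ c : V, f a b c = ∑ a : V, ∑ b : V, ∑ c : V, f b c a :=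
  (s23 f).trans (s12 fun a b c => f a c b)

private lemma rot3' (f : V → V → V → ℚ) :
    ∑ a : V, ∑ b : V, ∑ c : V, f a b c = ∑ a : V, ∑ b : V, ∑ c : V, f c a b :=
  (rot3 f).trans (rot3 fun a b c => f b c a)

end helpers

private lemma inc_two {V : Type*} [Fintype V] (r : V → V → Prop) :
    Nat.card {t : V × V × V // t.2.1 ≠ t.2.2 ∧ ¬ r t.2.1 t.2.2 ∧ ¬ r t.2.2 t.2.1 ∧
      ((r t.1 t.2.1 ∧ r t.1 t.2.2) ∨ (r t.2.1 t.1 ∧ r t.2.2 t.1))} = 2 * dInc r := by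
  classical
  rw [dInc, Nat.card_eq_fintype_card, Nat.card_eq_fintype_card,
    Fintype.card_subtype, Fintype.card_subtype]
  rw [Finset.card_eq_sum_card_fiberwise
    (f := fun t : V × V × V => ((t.1, s(t.2.1, t.2.2)) : V × Sym2 V))
    (t := univ.filter fun p : V × Sym2 V => ∃ v w, p.2 = s(v, w) ∧ v ≠ w ∧ ¬ r v w ∧ ¬ r w v ∧
      ((r p.1 v ∧ r p.1 w) ∨ (r v p.1 ∧ r w p.1)))]
  · rw [Finset.sum_congr rfl (fun p hp => ?_), Finset.sum_const, smul_eq_mul, mul_comm]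
    simp only [mem_filter, mem_univ, true_and] at hp
    obtain ⟨v, w, he, hvw, h1, h2, h3⟩ := hp
    have hset : ((univ.filter fun t : V × V × V => t.2.1 ≠ t.2.2 ∧ ¬ r t.2.1 t.2.2 ∧ ¬ r t.2.2 t.2.1 ∧
        ((r t.1 t.2.1 ∧ r t.1 t.2.2) ∨ (r t.2.1 t.1 ∧ r t.2.2 t.1))).filter
        fun t => ((t.1, s(t.2.1, t.2.2)) : V × Sym2 V) = p)
        = {(p.1, v, w), (p.1, w, v)} := by
      ext t
      obtain ⟨a, e⟩ := p
      simp only [mem_filter, mem_univ, true_and, mem_insert, mem_singleton] at he ⊢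
      constructor
      · rintro ⟨⟨hne, hn1, hn2, hor⟩, heq⟩
        obtain ⟨t1, t2, t3⟩ := t
        simp only [Prod.mk.injEq] at heq ⊢
        obtain ⟨h1', h2'⟩ := heq
        rw [he, Sym2.eq_iff] at h2'
        rcases h2' with ⟨rfl, rfl⟩ | ⟨rfl, rfl⟩
        · exact Or.inl ⟨h1'.symm ▸ rfl, rfl, rfl⟩
        · exact Or.inr ⟨h1'.symm ▸ rfl, rfl, rfl⟩
      · rintro (rfl | rfl)
        · exact ⟨⟨hvw, h1, h2, h3⟩, by simp [he]⟩
        · refine ⟨⟨hvw.symm, h2, h1, ?_⟩, by simp [he, Sym2.eq_swap]⟩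
          rcases h3 with ⟨ha, hb⟩ | ⟨ha, hb⟩
          · exact Or.inl ⟨hb, ha⟩
          · exact Or.inr ⟨hb, ha⟩
    rw [hset, Finset.card_insert_of_notMem (by simp [Prod.ext_iff, hvw]), Finset.card_singleton]
  · intro t ht
    simp only [mem_coe, mem_filter, mem_univ, true_and] at ht ⊢
    exact ⟨t.2.1, t.2.2, rfl, ht⟩

set_option maxHeartbeats 1000000 in
theorem stmt_18 {V : Type*} [Fintype V] (r : V → V → Prop)
    (hasymm : ∀ u v, r u v → ¬ r v u)
    (hacyclic : ∀ v, ¬ Relation.TransGen r v v) :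
    (1 / 2 : ℚ) * ∑ v : V, ((dIndeg r v : ℚ) - (dOutdeg r v : ℚ)) ^ 2 =
      (dEdges r : ℚ) + (dTri r : ℚ) + (dInc r : ℚ) - (dCom r : ℚ) := by
  classical
  set F := fun u v : V => if r u v then (1:ℚ) else 0 with hF
  have hirr : ∀ v, ¬ r v v := fun v h => hacyclic v (Relation.TransGen.single h)
  -- cast identities
  have hin : ∀ v, (dIndeg r v : ℚ) = ∑ u : V, F u v := fun v => qcard _
  have hout : ∀ v, (dOutdeg r v : ℚ) = ∑ u : V, F v u := fun v => qcard _
  have hE : (dEdges r : ℚ) = ∑ a : V, ∑ b : V, F a b := by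
    rw [dEdges, qcard, Fintype.sum_prod_type]
  have hT : (dTri r : ℚ) = ∑ a : V, ∑ b : V, ∑ c : V, F a b * F b c * F a c := by
    rw [dTri, qcard]
    simp only [Fintype.sum_prod_type]
    refine Finset.sum_congr rfl fun a _ => Finset.sum_congr rfl fun b _ =>
      Finset.sum_congr rfl fun c _ => ?_
    by_cases h1 : r a b <;> by_cases h2 : r b c <;> by_cases h3 : r a c <;>
      simp [hF, h1, h2, h3]
  have hC : (dCom r : ℚ) = ∑ a : V, ∑ b : V, ∑ c : V,
      (if (r a b ∧ r b c ∧ ¬ r a c ∧ ¬ r c a) then (1:ℚ) else 0) := by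
    rw [dCom, qcard]
    simp only [Fintype.sum_prod_type]
  have hI : 2 * (dInc r : ℚ) = ∑ a : V, ∑ b : V, ∑ c : V,
      (if (b ≠ c ∧ ¬ r b c ∧ ¬ r c b ∧ ((r a b ∧ r a c) ∨ (r b a ∧ r c a)))
        then (1:ℚ) else 0) := by
    have h2 := inc_two r
    have : ((2 * dInc r : ℕ) : ℚ) = (Nat.card {t : V × V × V // t.2.1 ≠ t.2.2 ∧
        ¬ r t.2.1 t.2.2 ∧ ¬ r t.2.2 t.2.1 ∧
        ((r t.1 t.2.1 ∧ r t.1 t.2.2) ∨ (r t.2.1 t.1 ∧ r t.2.2 t.1))} : ℚ) := by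
      rw [h2]
    push_cast at this
    rw [this, qcard]
    simp only [Fintype.sum_prod_type]
  -- pointwise identity
  have hpt : ∀ v u w : V, (F u v - F v u) * (F w v - F v w) =
      (F u v * F w v * F u w + F u v * F w v * F w u
        + F v u * F v w * F u w + F v u * F v w * F w u)
      + (if (u ≠ w ∧ ¬ r u w ∧ ¬ r w u ∧ ((r v u ∧ r v w) ∨ (r u v ∧ r w v)))
          then (1:ℚ) else 0)
      + (if u = w then F u v + F v u else 0)
      - (F u v * F v w * F u w
        + (if (r u v ∧ r v w ∧ ¬ r u w ∧ ¬ r w u) then (1:ℚ) else 0))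
      - (F w v * F v u * F w u
        + (if (r w v ∧ r v u ∧ ¬ r w u ∧ ¬ r u w) then (1:ℚ) else 0)) := by
    intro v u w
    by_cases h : u = w
    · subst h
      by_cases h1 : r u v <;> by_cases h2 : r v u <;>
        first
          | exact absurd h2 (hasymm _ _ h1)
          | simp [hF, hirr u, h1, h2]
    · by_cases h1 : r u v <;> by_cases h2 : r v u <;> by_cases h3 : r w v <;>
        by_cases h4 : r v w <;> by_cases h5 : r u w <;> by_cases h6 : r w u <;>
        first
          | exact absurd h2 (hasymm _ _ h1)
          | exact absurd h4 (hasymm _ _ h3)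
          | exact absurd h6 (hasymm _ _ h5)
          | exact absurd (hacyclic u (Relation.TransGen.head h1
              (Relation.TransGen.head h4 (Relation.TransGen.single h6)))) (fun f => f)
          | exact absurd (hacyclic w (Relation.TransGen.head h3
              (Relation.TransGen.head h2 (Relation.TransGen.single h5)))) (fun f => f)
          | (simp [hF, h, h1, h2, h3, h4, h5, h6]; try ring)
  -- expand the square into a triple sum
  have hsq : ∑ v : V, ((dIndeg r v : ℚ) - (dOutdeg r v : ℚ)) ^ 2
      = ∑ v : V, ∑ u : V, ∑ w : V, (F u v - F v u) * (F w v - F v w) := by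
    refine Finset.sum_congr rfl fun v _ => ?_
    rw [hin, hout, ← Finset.sum_sub_distrib, pow_two, Finset.sum_mul_sum]
  -- the grand computation
  have grand : ∑ v : V, ∑ u : V, ∑ w : V, (F u v - F v u) * (F w v - F v w)
      = 2 * (dEdges r : ℚ) + 2 * (dTri r : ℚ) + 2 * (dInc r : ℚ) - 2 * (dCom r : ℚ) := by
    rw [Finset.sum_congr rfl fun v _ => Finset.sum_congr rfl fun u _ =>
      Finset.sum_congr rfl fun w _ => hpt v u w]
    simp only [Finset.sum_add_distrib, Finset.sum_sub_distrib]
    have e1 : (∑ v : V, ∑ u : V, ∑ w : V, F u v * F w v * F u w)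
        = ∑ a : V, ∑ b : V, ∑ c : V, F a b * F b c * F a c := by
      refine Eq.trans ?_ (rot3 fun a b c => F a b * F b c * F a c).symm
      exact Finset.sum_congr rfl fun a _ => Finset.sum_congr rfl fun b _ =>
        Finset.sum_congr rfl fun c _ => by ring
    have e2 : (∑ v : V, ∑ u : V, ∑ w : V, F u v * F w v * F w u)
        = ∑ a : V, ∑ b : V, ∑ c : V, F a b * F b c * F a c := by
      refine Eq.trans ?_ (s13 fun a b c => F a b * F b c * F a c).symm
      exact Finset.sum_congr rfl fun a _ => Finset.sum_congr rfl fun b _ =>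
        Finset.sum_congr rfl fun c _ => by ring
    have e3 : (∑ v : V, ∑ u : V, ∑ w : V, F v u * F v w * F u w)
        = ∑ a : V, ∑ b : V, ∑ c : V, F a b * F b c * F a c :=
      Finset.sum_congr rfl fun a _ => Finset.sum_congr rfl fun b _ =>
        Finset.sum_congr rfl fun c _ => by ring
    have e4 : (∑ v : V, ∑ u : V, ∑ w : V, F v u * F v w * F w u)
        = ∑ a : V, ∑ b : V, ∑ c : V, F a b * F b c * F a c := by
      refine Eq.trans ?_ (s23 fun a b c => F a b * F b c * F a c).symm
      exact Finset.sum_congr rfl fun a _ => Finset.sum_congr rfl fun b _ =>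
        Finset.sum_congr rfl fun c _ => by ring
    have ec1 : (∑ v : V, ∑ u : V, ∑ w : V, F u v * F v w * F u w)
        = ∑ a : V, ∑ b : V, ∑ c : V, F a b * F b c * F a c := by
      refine Eq.trans ?_ (s12 fun a b c => F a b * F b c * F a c).symm
      exact Finset.sum_congr rfl fun a _ => Finset.sum_congr rfl fun b _ =>
        Finset.sum_congr rfl fun c _ => by ring
    have ec3 : (∑ v : V, ∑ u : V, ∑ w : V, F w v * F v u * F w u)
        = ∑ a : V, ∑ b : V, ∑ c : V, F a b * F b c * F a c := by
      refine Eq.trans ?_ (rot3' fun a b c => F a b * F b c * F a c).symm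
      exact Finset.sum_congr rfl fun a _ => Finset.sum_congr rfl fun b _ =>
        Finset.sum_congr rfl fun c _ => by ring
    have ecom1 : (∑ v : V, ∑ u : V, ∑ w : V,
        (if (r u v ∧ r v w ∧ ¬ r u w ∧ ¬ r w u) then (1:ℚ) else 0))
        = ∑ a : V, ∑ b : V, ∑ c : V,
          (if (r a b ∧ r b c ∧ ¬ r a c ∧ ¬ r c a) then (1:ℚ) else 0) :=
      (s12 fun a b c => if (r a b ∧ r b c ∧ ¬ r a c ∧ ¬ r c a) then (1:ℚ) else 0).symm
    have ecom2 : (∑ v : V, ∑ u : V, ∑ w : V,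
        (if (r w v ∧ r v u ∧ ¬ r w u ∧ ¬ r u w) then (1:ℚ) else 0))
        = ∑ a : V, ∑ b : V, ∑ c : V,
          (if (r a b ∧ r b c ∧ ¬ r a c ∧ ¬ r c a) then (1:ℚ) else 0) :=
      (rot3' fun a b c => if (r a b ∧ r b c ∧ ¬ r a c ∧ ¬ r c a) then (1:ℚ) else 0).symm
    have ediag : (∑ v : V, ∑ u : V, ∑ w : V, (if u = w then F u v + F v u else 0))
        = (∑ a : V, ∑ b : V, F a b) + (∑ a : V, ∑ b : V, F a b) := by
      have : ∀ v u : V, (∑ w : V, (if u = w then F u v + F v u else 0)) = F u v + F v u := by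
        intro v u
        rw [Finset.sum_ite_eq]
        simp
      rw [Finset.sum_congr rfl fun v _ => Finset.sum_congr rfl fun u _ => this v u]
      simp only [Finset.sum_add_distrib]
      congr 1
      exact Finset.sum_comm
    rw [e1, e2, e3, e4, ec1, ec3, ecom1, ecom2, ediag, hE, hT, hC, hI]
    ring
  rw [hsq, grand]
  ring
end
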